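/- Under the stated hypotheses, the derivative of r at 0 vanishes: Dr(0) = 0. (Equivalently, in the Taylor expansion of the equilibrium r(a) of the averaged system in the amplitudes a = (a₁, a₂), all first-order coefficients are zero.) -/

import Mathlib

open intervalIntegral Real

set_option maxHeartbeats 4000000



/-- integral of sin(kσ) over a full-period interval vanishes -/
lemma int_sin_zero (k T : ℝ) (m : ℤ) (hm : k * T = 2 * Real.pi * m) :
    ∫ σ in (0:ℝ)..T, Real.sin (k * σ) = 0 := by
  rcases eq_or_ne k 0 with hk | hk
  · simp [hk]
  · rw [intervalIntegral.integral_comp_mul_left _ hk]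
    rw [mul_zero, integral_sin]
    have : Real.cos (k * T) = 1 := by
      rw [hm]
      rw [show 2 * Real.pi * (m:ℝ) = (m:ℝ) * (2 * Real.pi) by ring]
      exact Real.cos_int_mul_two_pi m
    simp [this]


lemma int_cos_zero (k T : ℝ) (hk : k ≠ 0) (m : ℤ) (hm : k * T = 2 * Real.pi * m) :
    ∫ σ in (0:ℝ)..T, Real.cos (k * σ) = 0 := by
  rw [intervalIntegral.integral_comp_mul_left _ hk]
  rw [mul_zero, integral_cos]
  have : Real.sin (k * T) = 0 := by
    rw [hm, show 2 * Real.pi * (m:ℝ) = (m:ℝ) * (2 * Real.pi) by ring]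
    rw [show (m:ℝ) * (2*Real.pi) = ((2*m : ℤ):ℝ)*Real.pi by push_cast; ring]
    exact Real.sin_int_mul_pi (2*m)
  rw [this]; simp

/-- ∫ sin(aσ)sin(bσ) with a ≠ b, full periods, a+b ≠ 0 -/
lemma int_sin_sin_zero (a b T : ℝ) (hab : a ≠ b) (hab' : a + b ≠ 0)
    (ma mb : ℤ) (ha : a * T = 2 * Real.pi * ma) (hb : b * T = 2 * Real.pi * mb) :
    ∫ σ in (0:ℝ)..T, Real.sin (a * σ) * Real.sin (b * σ) = 0 := by
  have h1 : ∀ σ : ℝ, Real.sin (a*σ) * Real.sin (b*σ)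
      = (Real.cos ((a-b)*σ) - Real.cos ((a+b)*σ)) / 2 := by
    intro σ
    have e1 := Real.cos_sub (a*σ) (b*σ)
    have e2 := Real.cos_add (a*σ) (b*σ)
    have : (a-b)*σ = a*σ - b*σ := by ring
    rw [this]
    have : (a+b)*σ = a*σ + b*σ := by ring
    rw [this, e1, e2]; ring
  rw [intervalIntegral.integral_congr (g := fun σ => (Real.cos ((a-b)*σ) - Real.cos ((a+b)*σ))/2)
      (fun σ _ => h1 σ)]
  have i1 : IntervalIntegrable (fun σ => Real.cos ((a-b)*σ)) MeasureTheory.volume 0 T :=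
    (Real.continuous_cos.comp (continuous_const.mul continuous_id)).intervalIntegrable 0 T
  have i2 : IntervalIntegrable (fun σ => Real.cos ((a+b)*σ)) MeasureTheory.volume 0 T :=
    (Real.continuous_cos.comp (continuous_const.mul continuous_id)).intervalIntegrable 0 T
  rw [show (fun σ => (Real.cos ((a-b)*σ) - Real.cos ((a+b)*σ))/2)
      = (fun σ => (2:ℝ)⁻¹ * (Real.cos ((a-b)*σ) - Real.cos ((a+b)*σ))) by funext; ring]
  rw [intervalIntegral.integral_const_mul, intervalIntegral.integral_sub i1 i2]
  rw [int_cos_zero (a-b) T (sub_ne_zero.2 hab) (ma - mb) (by push_cast; linarith),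
      int_cos_zero (a+b) T hab' (ma + mb) (by push_cast; linarith)]
  ring

lemma int_sin_sq (a T : ℝ) (ha0 : a ≠ 0) (ma : ℤ) (ha : a * T = 2 * Real.pi * ma) :
    ∫ σ in (0:ℝ)..T, Real.sin (a * σ) * Real.sin (a * σ) = T / 2 := by
  have h1 : ∀ σ : ℝ, Real.sin (a*σ) * Real.sin (a*σ)
      = (1 - Real.cos ((a+a)*σ)) / 2 := by
    intro σ
    have e2 := Real.cos_add (a*σ) (a*σ)
    have hp := Real.sin_sq_add_cos_sq (a*σ)
    have : (a+a)*σ = a*σ + a*σ := by ring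
    rw [this, e2]; nlinarith [hp]
  rw [intervalIntegral.integral_congr (g := fun σ => (1 - Real.cos ((a+a)*σ))/2)
      (fun σ _ => h1 σ)]
  have i2 : IntervalIntegrable (fun σ => Real.cos ((a+a)*σ)) MeasureTheory.volume 0 T :=
    (Real.continuous_cos.comp (continuous_const.mul continuous_id)).intervalIntegrable 0 T
  rw [show (fun σ:ℝ => (1 - Real.cos ((a+a)*σ))/2)
      = (fun σ => (2:ℝ)⁻¹ * ((1:ℝ) - Real.cos ((a+a)*σ))) by funext; ring]
  rw [intervalIntegral.integral_const_mul,
      intervalIntegral.integral_sub (intervalIntegrable_const) i2]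
  rw [int_cos_zero (a+a) T (by intro hc; exact ha0 (by linarith)) (ma + ma) (by push_cast; linarith)]
  simp; ring

lemma int_sin3_zero (a b c T : ℝ) (ma mb mc : ℤ)
    (ha : a * T = 2 * Real.pi * ma) (hb : b * T = 2 * Real.pi * mb)
    (hc : c * T = 2 * Real.pi * mc) :
    ∫ σ in (0:ℝ)..T, Real.sin (a * σ) * Real.sin (b * σ) * Real.sin (c * σ) = 0 := by
  have h1 : ∀ σ : ℝ, Real.sin (a*σ) * Real.sin (b*σ) * Real.sin (c*σ)
      = (Real.sin ((c+a-b)*σ) + Real.sin ((c-a+b)*σ)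
        - Real.sin ((c+a+b)*σ) - Real.sin ((c-a-b)*σ)) / 4 := by
    intro σ
    have e1 : (c+a-b)*σ = (c*σ + a*σ) - b*σ := by ring
    have e2 : (c-a+b)*σ = (c*σ + b*σ) - a*σ := by ring
    have e3 : (c+a+b)*σ = (c*σ + a*σ) + b*σ := by ring
    have e4 : (c-a-b)*σ = (c*σ - a*σ) - b*σ := by ring
    rw [e1, e2, e3, e4]
    simp only [Real.sin_add, Real.sin_sub, Real.cos_add, Real.cos_sub]
    ring
  rw [intervalIntegral.integral_congr (g := fun σ => (Real.sin ((c+a-b)*σ) + Real.sin ((c-a+b)*σ)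
        - Real.sin ((c+a+b)*σ) - Real.sin ((c-a-b)*σ)) / 4) (fun σ _ => h1 σ)]
  have ii : ∀ k : ℝ, IntervalIntegrable (fun σ => Real.sin (k*σ)) MeasureTheory.volume 0 T :=
    fun k => (Real.continuous_sin.comp (continuous_const.mul continuous_id)).intervalIntegrable 0 T
  rw [show (fun σ => (Real.sin ((c+a-b)*σ) + Real.sin ((c-a+b)*σ)
        - Real.sin ((c+a+b)*σ) - Real.sin ((c-a-b)*σ)) / 4)
      = (fun σ => (4:ℝ)⁻¹ * (Real.sin ((c+a-b)*σ) + Real.sin ((c-a+b)*σ)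
        - Real.sin ((c+a+b)*σ) - Real.sin ((c-a-b)*σ))) by funext; ring]
  rw [intervalIntegral.integral_const_mul,
      intervalIntegral.integral_sub (((ii _).add (ii _)).sub (ii _)) (ii _),
      intervalIntegral.integral_sub ((ii _).add (ii _)) (ii _),
      intervalIntegral.integral_add (ii _) (ii _)]
  rw [int_sin_zero (c+a-b) T (mc+ma-mb) (by push_cast; linarith),
      int_sin_zero (c-a+b) T (mc-ma+mb) (by push_cast; linarith),
      int_sin_zero (c+a+b) T (mc+ma+mb) (by push_cast; linarith),
      int_sin_zero (c-a-b) T (mc-ma-mb) (by push_cast; linarith)]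
  ring


lemma taylor2 (v : ℝ × ℝ → ℝ) (hv : ContDiff ℝ 2 v) (hdv0 : fderiv ℝ v 0 = 0)
    (hsymm : ∀ x y : ℝ × ℝ, fderiv ℝ (fderiv ℝ v) 0 x y = fderiv ℝ (fderiv ℝ v) 0 y x)
    {ε : ℝ} (hε : 0 < ε) :
    ∃ δ > 0, ∀ x : ℝ × ℝ, ‖x‖ ≤ δ →
      |v x - v 0 - (1/2) * fderiv ℝ (fderiv ℝ v) 0 x x| ≤ ε * ‖x‖^2 := by
  set H := fderiv ℝ (fderiv ℝ v) 0 with hHdef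
  have hdv : ContDiff ℝ 1 (fderiv ℝ v) := hv.fderiv_right (by norm_num)
  have hH : HasFDerivAt (fderiv ℝ v) H 0 :=
    (hdv.differentiable (by norm_num) 0).hasFDerivAt
  have hlo : (fun y => fderiv ℝ v y - H y) =o[nhds (0 : ℝ × ℝ)] fun y => y := by
    have := hasFDerivAt_iff_isLittleO_nhds_zero.1 hH
    simpa [hdv0] using this
  obtain ⟨δ, hδpos, hδ⟩ := Metric.eventually_nhds_iff.1 ((Asymptotics.isLittleO_iff.1 hlo) hε)
  refine ⟨δ/2, by positivity, fun x hx => ?_⟩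
  -- derivative of ψ := v - (1/2) H • •
  have hQ : ∀ y : ℝ × ℝ, HasFDerivAt (fun x : ℝ × ℝ => (1/2) * H x x) (H y) y := by
    intro y
    have h1 : HasFDerivAt (fun x : ℝ × ℝ => H x) H y := H.hasFDerivAt
    have h2 : HasFDerivAt (fun x : ℝ × ℝ => H x x) ((H y).comp (ContinuousLinearMap.id ℝ (ℝ×ℝ)) + H.flip y) y :=
      h1.clm_apply (hasFDerivAt_id y)
    have h3 := h2.const_mul (1/2 : ℝ)
    have he : ((1/2 : ℝ) • ((H y).comp (ContinuousLinearMap.id ℝ (ℝ×ℝ)) + H.flip y)) = H y := by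
      refine ContinuousLinearMap.ext fun w => ?_
      simp only [ContinuousLinearMap.smul_apply, ContinuousLinearMap.add_apply,
        ContinuousLinearMap.flip_apply, ContinuousLinearMap.coe_comp', Function.comp_apply,
        ContinuousLinearMap.coe_id', id_eq, smul_eq_mul]
      rw [hsymm w y]; ring
    rw [he] at h3
    exact h3
  have hψ : ∀ y : ℝ × ℝ, HasFDerivAt (fun x => v x - (1/2) * H x x) (fderiv ℝ v y - H y) y :=
    fun y => ((hv.differentiable (by norm_num) y).hasFDerivAt).sub (hQ y)
  set ψ := fun x : ℝ × ℝ => v x - (1/2) * H x x with hψdef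
  have key : ∀ x : ℝ × ℝ, ‖x‖ ≤ δ/2 → ‖ψ x - ψ 0‖ ≤ (ε * ‖x‖) * ‖x‖ := by
    intro x hx
    have hmvt := Convex.norm_image_sub_le_of_norm_fderiv_le (s := Metric.closedBall (0:ℝ×ℝ) ‖x‖)
      (f := ψ) (C := ε * ‖x‖) (x := (0:ℝ×ℝ)) (y := x)
      (fun y _ => (hψ y).differentiableAt) (fun y hy => ?_)
      (convex_closedBall _ _) (Metric.mem_closedBall_self (norm_nonneg x)) ?_
    · simpa using hmvt
    · rw [(hψ y).fderiv]
      have hyx : ‖y‖ ≤ ‖x‖ := by simpa using hy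
      have : dist y 0 < δ := by
        simp only [dist_zero_right]
        calc ‖y‖ ≤ ‖x‖ := hyx
          _ ≤ δ/2 := hx
          _ < δ := by linarith
      calc ‖fderiv ℝ v y - H y‖ ≤ ε * ‖y‖ := hδ this
        _ ≤ ε * ‖x‖ := by nlinarith [hε.le]
    · simp [Metric.mem_closedBall]
  have hx' := key x hx
  have h00 : ψ 0 = v 0 := by simp [hψdef]
  have : ‖ψ x - ψ 0‖ = |v x - v 0 - (1/2) * H x x| := by
    rw [h00, hψdef]
    simp only [Real.norm_eq_abs]
    congr 1; ring
  rw [this] at hx'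
  calc |v x - v 0 - (1/2) * H x x| ≤ (ε * ‖x‖) * ‖x‖ := hx'
    _ = ε * ‖x‖^2 := by ring


lemma quad_vanish (v : ℝ × ℝ → ℝ) (hv : ContDiff ℝ 2 v) (hdv0 : fderiv ℝ v 0 = 0)
    (hsymm : ∀ x y : ℝ × ℝ, fderiv ℝ (fderiv ℝ v) 0 x y = fderiv ℝ (fderiv ℝ v) 0 y x)
    (T ω₁ ω₂ ω : ℝ) (hT : 0 < T) (m : ℤ) (hm : ω * T = 2 * Real.pi * m)
    (U : Set (ℝ × ℝ)) (hU : U ∈ nhds (0 : ℝ × ℝ))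
    (r : ℝ × ℝ → ℝ × ℝ) (hr0 : r 0 = 0) (L : ℝ × ℝ →L[ℝ] ℝ × ℝ)
    (hrd : HasFDerivAt r L 0)
    (heq : ∀ a ∈ U,
      ∫ σ in (0 : ℝ)..T,
        v (r a + (a.1 * Real.sin (ω₁ * σ), a.2 * Real.sin (ω₂ * σ))) * Real.sin (ω * σ) = 0)
    (h : ℝ × ℝ) :
    ∫ σ in (0:ℝ)..T,
      (fderiv ℝ (fderiv ℝ v) 0 (L h + (h.1 * Real.sin (ω₁ * σ), h.2 * Real.sin (ω₂ * σ)))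
        (L h + (h.1 * Real.sin (ω₁ * σ), h.2 * Real.sin (ω₂ * σ)))) * Real.sin (ω * σ) = 0 := by
  set H := fderiv ℝ (fderiv ℝ v) 0 with hHdef
  clear_value H
  obtain ⟨p, hp⟩ : ∃ p : ℝ → ℝ × ℝ,
      ∀ σ, p σ = (h.1 * Real.sin (ω₁ * σ), h.2 * Real.sin (ω₂ * σ)) := ⟨_, fun _ => rfl⟩
  obtain ⟨q, hq⟩ : ∃ q : ℝ → ℝ × ℝ, ∀ σ, q σ = L h + p σ := ⟨_, fun _ => rfl⟩
  have hpfun : p = fun σ => (h.1 * Real.sin (ω₁ * σ), h.2 * Real.sin (ω₂ * σ)) := funext hp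
  have hpcont : Continuous p := by
    rw [hpfun]
    exact (continuous_const.mul (Real.continuous_sin.comp
      (continuous_const.mul continuous_id))).prodMk
      (continuous_const.mul (Real.continuous_sin.comp (continuous_const.mul continuous_id)))
  have hqcont : Continuous q := by
    rw [funext hq]; exact continuous_const.add hpcont
  have hpbound : ∀ σ, ‖p σ‖ ≤ ‖h‖ := by
    intro σ
    rw [hp σ, Prod.norm_def]
    apply max_le
    · calc ‖h.1 * Real.sin (ω₁ * σ)‖ = ‖h.1‖ * |Real.sin (ω₁*σ)| := by rw [norm_mul]; rfl
        _ ≤ ‖h.1‖ * 1 := mul_le_mul_of_nonneg_left (Real.abs_sin_le_one _) (norm_nonneg _)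
        _ ≤ ‖h‖ := by rw [mul_one]; exact norm_fst_le h
    · calc ‖h.2 * Real.sin (ω₂ * σ)‖ = ‖h.2‖ * |Real.sin (ω₂*σ)| := by rw [norm_mul]; rfl
        _ ≤ ‖h.2‖ * 1 := mul_le_mul_of_nonneg_left (Real.abs_sin_le_one _) (norm_nonneg _)
        _ ≤ ‖h‖ := by rw [mul_one]; exact norm_snd_le h
  have hqbound : ∀ σ, ‖q σ‖ ≤ ‖L‖ * ‖h‖ + ‖h‖ := fun σ => by
    rw [hq σ]
    exact (norm_add_le _ _).trans (add_le_add (L.le_opNorm h) (hpbound σ))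
  have hHqq : Continuous fun σ => H (q σ) (q σ) :=
    (H.continuous.comp hqcont).clm_apply hqcont
  obtain ⟨I, hIdef⟩ : ∃ I : ℝ, I = ∫ σ in (0:ℝ)..T, H (q σ) (q σ) * Real.sin (ω * σ) := ⟨_, rfl⟩
  obtain ⟨K, hK0, hKdef⟩ : ∃ K : ℝ, 0 ≤ K ∧ K = ‖L‖ * ‖h‖ + 2 * ‖h‖ :=
    ⟨_, by positivity, rfl⟩
  obtain ⟨C, hC0, hCdef⟩ : ∃ C : ℝ, 0 ≤ C ∧ C = 2 * T * (K^2 + 2 * ‖H‖ * ‖h‖ * K) :=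
    ⟨_, by positivity, rfl⟩
  have main : ∀ ε : ℝ, 0 < ε → ε ≤ 1 → |I| ≤ ε * C := by
    intro ε hε hε1
    have hsymm2 : ∀ x y : ℝ × ℝ, fderiv ℝ (fderiv ℝ v) 0 x y = fderiv ℝ (fderiv ℝ v) 0 y x := by
      intro x y; rw [← hHdef]; exact hsymm x y
    obtain ⟨δ₁, hδ₁pos, hδ₁⟩ := taylor2 v hv hdv0 hsymm2 hε
    rw [← hHdef] at hδ₁
    have hlor : (fun a => r a - L a) =o[nhds (0:ℝ×ℝ)] fun a => a := by
      have := hasFDerivAt_iff_isLittleO_nhds_zero.1 hrd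
      simpa [hr0] using this
    obtain ⟨δ₂, hδ₂pos, hδ₂⟩ := Metric.eventually_nhds_iff.1 ((Asymptotics.isLittleO_iff.1 hlor) hε)
    obtain ⟨δ₃, hδ₃pos, hδ₃⟩ := Metric.mem_nhds_iff.1 hU
    obtain ⟨δ, hδpos, hδ3, hδ2, hδ1⟩ : ∃ δ : ℝ, 0 < δ ∧ δ ≤ δ₃ ∧ δ ≤ δ₂ ∧ δ ≤ δ₁ :=
      ⟨min δ₃ (min δ₂ δ₁), lt_min hδ₃pos (lt_min hδ₂pos hδ₁pos), min_le_left _ _,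
        (min_le_right _ _).trans (min_le_left _ _), (min_le_right _ _).trans (min_le_right _ _)⟩
    have hden : 0 < K + ‖h‖ + 1 := by positivity
    obtain ⟨t, htpos, htb⟩ : ∃ t : ℝ, 0 < t ∧ t * (K + ‖h‖ + 1) = δ / 2 :=
      ⟨δ / (2 * (K + ‖h‖ + 1)), by positivity, by field_simp⟩
    have hth : t * ‖h‖ < δ := by
      have h1 : t * ‖h‖ ≤ t * (K + ‖h‖ + 1) :=
        mul_le_mul_of_nonneg_left (by linarith) htpos.le
      rw [htb] at h1; linarith
    have htK : t * K ≤ δ := by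
      have h1 : t * K ≤ t * (K + ‖h‖ + 1) :=
        mul_le_mul_of_nonneg_left (by linarith [norm_nonneg h]) htpos.le
      rw [htb] at h1; linarith
    obtain ⟨a, hadef⟩ : ∃ a : ℝ × ℝ, a = t • h := ⟨_, rfl⟩
    have hanorm : ‖a‖ = t * ‖h‖ := by
      rw [hadef, norm_smul, Real.norm_eq_abs, abs_of_pos htpos]
    have haU : a ∈ U := by
      apply hδ₃
      rw [Metric.mem_ball, dist_zero_right, hanorm]
      exact lt_of_lt_of_le hth hδ3
    have hra : ‖r a - L a‖ ≤ ε * (t * ‖h‖) := by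
      have hd : dist a 0 < δ₂ := by
        rw [dist_zero_right, hanorm]
        exact lt_of_lt_of_le hth hδ2
      have := hδ₂ hd
      simpa [hanorm] using this
    obtain ⟨x, hx⟩ : ∃ x : ℝ → ℝ × ℝ, ∀ σ, x σ = r a + t • p σ := ⟨_, fun _ => rfl⟩
    have hxcont : Continuous x := by
      rw [funext hx]; exact continuous_const.add (hpcont.const_smul t)
    have hLa : L a = t • L h := by rw [hadef, map_smul]
    have hdiffb : ∀ σ, ‖x σ - t • q σ‖ ≤ ε * (t * ‖h‖) := by
      intro σ
      have heq1 : x σ - t • q σ = r a - L a := by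
        rw [hx σ, hq σ, hLa, smul_add]
        abel
      rw [heq1]; exact hra
    have hxb : ∀ σ, ‖x σ‖ ≤ t * K := by
      intro σ
      have h1 : ‖r a‖ ≤ t * (‖L‖ * ‖h‖) + ε * (t * ‖h‖) := by
        have hsplit : ‖r a‖ ≤ ‖L a‖ + ‖r a - L a‖ := by
          have h0 := norm_add_le (L a) (r a - L a)
          rw [show L a + (r a - L a) = r a from by abel] at h0
          exact h0
        have hLab : ‖L a‖ ≤ t * (‖L‖ * ‖h‖) := by
          rw [hLa, norm_smul, Real.norm_eq_abs, abs_of_pos htpos]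
          exact mul_le_mul_of_nonneg_left (L.le_opNorm h) htpos.le
        linarith
      have h2 : ‖t • p σ‖ ≤ t * ‖h‖ := by
        rw [norm_smul, Real.norm_eq_abs, abs_of_pos htpos]
        exact mul_le_mul_of_nonneg_left (hpbound σ) htpos.le
      have h3 : ‖x σ‖ ≤ ‖r a‖ + ‖t • p σ‖ := by
        rw [hx σ]; exact norm_add_le _ _
      have h4 : ε * (t * ‖h‖) ≤ t * ‖h‖ := by
        nlinarith [mul_nonneg htpos.le (norm_nonneg h)]
      rw [hKdef]
      nlinarith [norm_nonneg h]
    have hzb : ∀ σ, ‖t • q σ‖ ≤ t * K := by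
      intro σ
      rw [norm_smul, Real.norm_eq_abs, abs_of_pos htpos]
      have := mul_le_mul_of_nonneg_left (hqbound σ) htpos.le
      rw [hKdef]
      nlinarith [norm_nonneg h]
    obtain ⟨C₁, hC₁0, hC₁def⟩ : ∃ C₁ : ℝ, 0 ≤ C₁ ∧ C₁ = K^2 + 2 * ‖H‖ * ‖h‖ * K :=
      ⟨_, by positivity, rfl⟩
    have hpt : ∀ σ, |v (x σ) * Real.sin (ω*σ) - v 0 * Real.sin (ω*σ)
        - (H (t • q σ) (t • q σ) / 2) * Real.sin (ω*σ)| ≤ ε * t^2 * C₁ := by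
      intro σ
      have hfactor : v (x σ) * Real.sin (ω*σ) - v 0 * Real.sin (ω*σ)
          - (H (t • q σ) (t • q σ) / 2) * Real.sin (ω*σ)
          = (v (x σ) - v 0 - H (t • q σ) (t • q σ) / 2) * Real.sin (ω*σ) := by ring
      rw [hfactor, abs_mul]
      have hsin : |Real.sin (ω*σ)| ≤ 1 := Real.abs_sin_le_one _
      have hstep : |v (x σ) - v 0 - H (t • q σ) (t • q σ) / 2| ≤ ε * t^2 * C₁ := by
        obtain ⟨y, hydef⟩ : ∃ y, y = x σ := ⟨_, rfl⟩
        obtain ⟨z, hzdef⟩ : ∃ z, z = t • q σ := ⟨_, rfl⟩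
        rw [← hydef, ← hzdef]
        have hyδ : ‖y‖ ≤ δ₁ := by rw [hydef]; exact (hxb σ).trans (htK.trans hδ1)
        have ht1 : |v y - v 0 - (1/2) * H y y| ≤ ε * ‖y‖^2 := hδ₁ y hyδ
        have hyK : ‖y‖ ≤ t * K := by rw [hydef]; exact hxb σ
        have hzK : ‖z‖ ≤ t * K := by rw [hzdef]; exact hzb σ
        have hyz : ‖y - z‖ ≤ ε * (t * ‖h‖) := by rw [hydef, hzdef]; exact hdiffb σ
        have hy2 : ‖y‖^2 ≤ (t*K)^2 := by nlinarith [norm_nonneg y]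
        have hHdiff : H y y - H z z = H (y - z) y + H z (y - z) := by
          simp only [map_sub, ContinuousLinearMap.sub_apply]; ring
        have hb1 : |H (y - z) y| ≤ ‖H‖ * (ε * (t * ‖h‖)) * (t * K) := by
          have h5 := H.le_opNorm₂ (y - z) y
          rw [Real.norm_eq_abs] at h5
          calc |H (y-z) y| ≤ ‖H‖ * ‖y - z‖ * ‖y‖ := h5
            _ ≤ ‖H‖ * (ε * (t * ‖h‖)) * (t * K) := by
                apply mul_le_mul
                · exact mul_le_mul_of_nonneg_left hyz (norm_nonneg H)
                · exact hyK
                · exact norm_nonneg y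
                · positivity
        have hb2 : |H z (y - z)| ≤ ‖H‖ * (t * K) * (ε * (t * ‖h‖)) := by
          have h5 := H.le_opNorm₂ z (y - z)
          rw [Real.norm_eq_abs] at h5
          calc |H z (y-z)| ≤ ‖H‖ * ‖z‖ * ‖y - z‖ := h5
            _ ≤ ‖H‖ * (t * K) * (ε * (t * ‖h‖)) := by
                apply mul_le_mul
                · exact mul_le_mul_of_nonneg_left hzK (norm_nonneg H)
                · exact hyz
                · exact norm_nonneg _
                · positivity
        have habs : |v y - v 0 - H z z / 2|
            ≤ |v y - v 0 - (1/2) * H y y| + (1/2) * |H y y - H z z| := by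
          have heq2 : v y - v 0 - H z z / 2
              = (v y - v 0 - (1/2) * H y y) + (1/2) * (H y y - H z z) := by ring
          rw [heq2]
          calc |(v y - v 0 - (1/2) * H y y) + (1/2) * (H y y - H z z)|
              ≤ |v y - v 0 - (1/2) * H y y| + |(1/2) * (H y y - H z z)| := abs_add_le _ _
            _ = |v y - v 0 - (1/2) * H y y| + (1/2) * |H y y - H z z| := by
                rw [abs_mul]; norm_num
        have hHd : |H y y - H z z| ≤ ‖H‖ * (ε * (t * ‖h‖)) * (t * K)
            + ‖H‖ * (t * K) * (ε * (t * ‖h‖)) := by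
          rw [hHdiff]
          exact (abs_add_le _ _).trans (add_le_add hb1 hb2)
        have hfin : ε * (t*K)^2 + (1/2) * (‖H‖ * (ε * (t * ‖h‖)) * (t * K)
            + ‖H‖ * (t * K) * (ε * (t * ‖h‖))) ≤ ε * t^2 * C₁ := by
          rw [hC₁def]
          have : ε * (t*K)^2 + (1/2) * (‖H‖ * (ε * (t * ‖h‖)) * (t * K)
              + ‖H‖ * (t * K) * (ε * (t * ‖h‖)))
              = ε * t^2 * (K^2 + ‖H‖ * ‖h‖ * K) := by ring
          rw [this]
          apply mul_le_mul_of_nonneg_left _ (by positivity)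
          nlinarith [mul_nonneg (mul_nonneg (norm_nonneg H) (norm_nonneg h)) hK0]
        calc |v y - v 0 - H z z / 2|
            ≤ |v y - v 0 - (1/2) * H y y| + (1/2) * |H y y - H z z| := habs
          _ ≤ ε * (t*K)^2 + (1/2) * (‖H‖ * (ε * (t * ‖h‖)) * (t * K)
              + ‖H‖ * (t * K) * (ε * (t * ‖h‖))) := by
              apply add_le_add (ht1.trans (mul_le_mul_of_nonneg_left hy2 hε.le))
              linarith [hHd]
          _ ≤ ε * t^2 * C₁ := hfin
      calc |v (x σ) - v 0 - H (t • q σ) (t • q σ) / 2| * |Real.sin (ω*σ)|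
          ≤ (ε * t^2 * C₁) * 1 :=
            mul_le_mul hstep hsin (abs_nonneg _) (by positivity)
        _ = ε * t^2 * C₁ := mul_one _
    have htq2 : ∀ σ, H (t • q σ) (t • q σ) = t^2 * (H (q σ) (q σ)) := by
      intro σ
      simp only [map_smul, ContinuousLinearMap.smul_apply, smul_eq_mul]
      ring
    have hsincont : Continuous fun σ : ℝ => Real.sin (ω*σ) :=
      Real.continuous_sin.comp (continuous_const.mul continuous_id)
    have i1 : IntervalIntegrable (fun σ => v (x σ) * Real.sin (ω*σ)) MeasureTheory.volume 0 T :=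
      ((hv.continuous.comp hxcont).mul hsincont).intervalIntegrable 0 T
    have i2 : IntervalIntegrable (fun σ => v 0 * Real.sin (ω*σ)) MeasureTheory.volume 0 T :=
      (continuous_const.mul hsincont).intervalIntegrable 0 T
    have i3 : IntervalIntegrable (fun σ => (H (t • q σ) (t • q σ) / 2) * Real.sin (ω*σ))
        MeasureTheory.volume 0 T := by
      apply Continuous.intervalIntegrable
      exact (((H.continuous.comp (hqcont.const_smul t)).clm_apply
        (hqcont.const_smul t)).div_const 2).mul hsincont
    have hint1 : (∫ σ in (0:ℝ)..T, v (x σ) * Real.sin (ω*σ)) = 0 := by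
      have hcongr : (∫ σ in (0:ℝ)..T, v (x σ) * Real.sin (ω*σ))
          = ∫ σ in (0:ℝ)..T,
            v (r a + (a.1 * Real.sin (ω₁ * σ), a.2 * Real.sin (ω₂ * σ))) * Real.sin (ω * σ) := by
        have harg : ∀ σ : ℝ, x σ
            = r a + (a.1 * Real.sin (ω₁ * σ), a.2 * Real.sin (ω₂ * σ)) := by
          intro σ
          have ha1 : a.1 = t * h.1 := by rw [hadef]; rfl
          have ha2 : a.2 = t * h.2 := by rw [hadef]; rfl
          rw [hx σ, hp σ, ha1, ha2, Prod.ext_iff]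
          constructor <;>
            simp only [Prod.fst_add, Prod.snd_add, Prod.smul_fst, Prod.smul_snd,
              smul_eq_mul] <;> ring
        apply intervalIntegral.integral_congr
        intro σ _
        dsimp only
        rw [harg σ]
      rw [hcongr]
      exact heq a haU
    have hint2 : (∫ σ in (0:ℝ)..T, v 0 * Real.sin (ω*σ)) = 0 := by
      rw [intervalIntegral.integral_const_mul, int_sin_zero ω T m hm, mul_zero]
    have hint3 : (∫ σ in (0:ℝ)..T, (H (t • q σ) (t • q σ) / 2) * Real.sin (ω*σ))
        = (t^2/2) * I := by
      rw [hIdef, ← intervalIntegral.integral_const_mul]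
      apply intervalIntegral.integral_congr
      intro σ _
      dsimp only
      rw [htq2 σ]
      ring
    have hgint : |(t^2/2) * I| ≤ ε * t^2 * C₁ * T := by
      have hnorm := intervalIntegral.norm_integral_le_of_norm_le_const
        (C := ε * t^2 * C₁)
        (f := fun σ => v (x σ) * Real.sin (ω*σ) - v 0 * Real.sin (ω*σ)
          - (H (t • q σ) (t • q σ) / 2) * Real.sin (ω*σ)) (a := 0) (b := T)
        (fun σ _ => by rw [Real.norm_eq_abs]; exact hpt σ)
      rw [intervalIntegral.integral_sub (i1.sub i2) i3,
          intervalIntegral.integral_sub i1 i2, hint1, hint2, hint3] at hnorm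
      rw [Real.norm_eq_abs] at hnorm
      have habs0 : |0 - 0 - t^2/2 * I| = |(t^2/2) * I| := by rw [abs_sub_comm]; norm_num
      rw [habs0] at hnorm
      calc |(t^2/2) * I| ≤ ε * t^2 * C₁ * |T - 0| := hnorm
        _ = ε * t^2 * C₁ * T := by rw [sub_zero, abs_of_pos hT]
    have ht2 : |I| ≤ 2 * ε * C₁ * T := by
      rw [abs_mul, abs_of_pos (by positivity : (0:ℝ) < t^2/2)] at hgint
      have ht2pos : (0:ℝ) < t^2 := by positivity
      nlinarith [abs_nonneg I]
    calc |I| ≤ 2 * ε * C₁ * T := ht2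
      _ = ε * C := by rw [hCdef, hC₁def]; ring
  have hI : I = 0 := by
    by_contra hI0
    have habs : 0 < |I| := abs_pos.2 hI0
    obtain ⟨ε, hεpos, hεle, hεle2⟩ : ∃ ε : ℝ, 0 < ε ∧ ε ≤ 1 ∧ ε ≤ |I| / (2 * (C + 1)) :=
      ⟨min 1 (|I| / (2 * (C + 1))), lt_min one_pos (by positivity), min_le_left _ _,
        min_le_right _ _⟩
    have h1 := main ε hεpos hεle
    have h2 : ε * C ≤ (|I| / (2 * (C + 1))) * C :=
      mul_le_mul_of_nonneg_right hεle2 hC0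
    have h3 : (|I| / (2 * (C + 1))) * C < |I| := by
      rw [div_mul_eq_mul_div, div_lt_iff₀ (by positivity)]
      nlinarith
    linarith
  have hgoal : (∫ σ in (0:ℝ)..T,
      (H (L h + (h.1 * Real.sin (ω₁ * σ), h.2 * Real.sin (ω₂ * σ)))
        (L h + (h.1 * Real.sin (ω₁ * σ), h.2 * Real.sin (ω₂ * σ)))) * Real.sin (ω * σ)) = I := by
    rw [hIdef]
    apply intervalIntegral.integral_congr
    intro σ _
    dsimp only
    rw [hq σ, hp σ]
  rw [hgoal]
  exact hI


lemma expand_int (H : (ℝ×ℝ) →L[ℝ] (ℝ×ℝ) →L[ℝ] ℝ) (b : ℝ×ℝ) (c₁ c₂ T ω₁ ω₂ ω : ℝ) :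
    (∫ σ in (0:ℝ)..T, H (b + (c₁ * Real.sin (ω₁*σ), c₂ * Real.sin (ω₂*σ)))
      (b + (c₁ * Real.sin (ω₁*σ), c₂ * Real.sin (ω₂*σ))) * Real.sin (ω*σ))
    = H b b * (∫ σ in (0:ℝ)..T, Real.sin (ω*σ))
    + (c₁ * (H b (1,0) + H (1,0) b)) * (∫ σ in (0:ℝ)..T, Real.sin (ω₁*σ) * Real.sin (ω*σ))
    + (c₂ * (H b (0,1) + H (0,1) b)) * (∫ σ in (0:ℝ)..T, Real.sin (ω₂*σ) * Real.sin (ω*σ))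
    + (c₁ * c₁ * H (1,0) (1,0)) * (∫ σ in (0:ℝ)..T, Real.sin (ω₁*σ) * Real.sin (ω₁*σ) * Real.sin (ω*σ))
    + (c₁ * c₂ * (H (1,0) (0,1) + H (0,1) (1,0))) * (∫ σ in (0:ℝ)..T, Real.sin (ω₁*σ) * Real.sin (ω₂*σ) * Real.sin (ω*σ))
    + (c₂ * c₂ * H (0,1) (0,1)) * (∫ σ in (0:ℝ)..T, Real.sin (ω₂*σ) * Real.sin (ω₂*σ) * Real.sin (ω*σ)) := by
  have hsk : ∀ k : ℝ, Continuous fun σ : ℝ => Real.sin (k*σ) :=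
    fun k => Real.continuous_sin.comp (continuous_const.mul continuous_id)
  have hdecomp : ∀ s u : ℝ, ((c₁*s, c₂*u) : ℝ×ℝ) = (c₁*s) • ((1:ℝ),(0:ℝ)) + (c₂*u) • ((0:ℝ),(1:ℝ)) := by
    intro s u
    rw [Prod.ext_iff]
    constructor <;> simp
  have hpt : ∀ σ : ℝ, H (b + (c₁ * Real.sin (ω₁*σ), c₂ * Real.sin (ω₂*σ)))
      (b + (c₁ * Real.sin (ω₁*σ), c₂ * Real.sin (ω₂*σ))) * Real.sin (ω*σ)
      = H b b * Real.sin (ω*σ)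
      + (c₁ * (H b (1,0) + H (1,0) b)) * (Real.sin (ω₁*σ) * Real.sin (ω*σ))
      + (c₂ * (H b (0,1) + H (0,1) b)) * (Real.sin (ω₂*σ) * Real.sin (ω*σ))
      + (c₁ * c₁ * H (1,0) (1,0)) * (Real.sin (ω₁*σ) * Real.sin (ω₁*σ) * Real.sin (ω*σ))
      + (c₁ * c₂ * (H (1,0) (0,1) + H (0,1) (1,0))) * (Real.sin (ω₁*σ) * Real.sin (ω₂*σ) * Real.sin (ω*σ))
      + (c₂ * c₂ * H (0,1) (0,1)) * (Real.sin (ω₂*σ) * Real.sin (ω₂*σ) * Real.sin (ω*σ)) := by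
    intro σ
    rw [hdecomp]
    simp only [map_add, map_smul, ContinuousLinearMap.add_apply,
      ContinuousLinearMap.smul_apply, smul_eq_mul]
    ring
  rw [intervalIntegral.integral_congr (fun σ _ => hpt σ)]
  have i0 : IntervalIntegrable (fun σ => H b b * Real.sin (ω*σ)) MeasureTheory.volume 0 T :=
    (continuous_const.mul (hsk ω)).intervalIntegrable 0 T
  have i1 : IntervalIntegrable (fun σ => (c₁ * (H b (1,0) + H (1,0) b)) * (Real.sin (ω₁*σ) * Real.sin (ω*σ))) MeasureTheory.volume 0 T :=
    (continuous_const.mul ((hsk ω₁).mul (hsk ω))).intervalIntegrable 0 T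
  have i2 : IntervalIntegrable (fun σ => (c₂ * (H b (0,1) + H (0,1) b)) * (Real.sin (ω₂*σ) * Real.sin (ω*σ))) MeasureTheory.volume 0 T :=
    (continuous_const.mul ((hsk ω₂).mul (hsk ω))).intervalIntegrable 0 T
  have i3 : IntervalIntegrable (fun σ => (c₁ * c₁ * H (1,0) (1,0)) * (Real.sin (ω₁*σ) * Real.sin (ω₁*σ) * Real.sin (ω*σ))) MeasureTheory.volume 0 T :=
    (continuous_const.mul (((hsk ω₁).mul (hsk ω₁)).mul (hsk ω))).intervalIntegrable 0 T
  have i4 : IntervalIntegrable (fun σ => (c₁ * c₂ * (H (1,0) (0,1) + H (0,1) (1,0))) * (Real.sin (ω₁*σ) * Real.sin (ω₂*σ) * Real.sin (ω*σ))) MeasureTheory.volume 0 T :=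
    (continuous_const.mul (((hsk ω₁).mul (hsk ω₂)).mul (hsk ω))).intervalIntegrable 0 T
  have i5 : IntervalIntegrable (fun σ => (c₂ * c₂ * H (0,1) (0,1)) * (Real.sin (ω₂*σ) * Real.sin (ω₂*σ) * Real.sin (ω*σ))) MeasureTheory.volume 0 T :=
    (continuous_const.mul (((hsk ω₂).mul (hsk ω₂)).mul (hsk ω))).intervalIntegrable 0 T
  rw [intervalIntegral.integral_add ((((i0.add i1).add i2).add i3).add i4) i5,
      intervalIntegral.integral_add (((i0.add i1).add i2).add i3) i4,
      intervalIntegral.integral_add ((i0.add i1).add i2) i3,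
      intervalIntegral.integral_add (i0.add i1) i2,
      intervalIntegral.integral_add i0 i1,
      intervalIntegral.integral_const_mul, intervalIntegral.integral_const_mul,
      intervalIntegral.integral_const_mul, intervalIntegral.integral_const_mul,
      intervalIntegral.integral_const_mul, intervalIntegral.integral_const_mul]


theorem equilibrium_first_order_coeffs_vanish
    (v : ℝ × ℝ → ℝ) (hv : ContDiff ℝ 2 v)
    (hdv0 : fderiv ℝ v 0 = 0)
    (hHpos : ∀ x : ℝ × ℝ, x ≠ 0 → 0 < fderiv ℝ (fderiv ℝ v) 0 x x)
    (T ω₁ ω₂ : ℝ) (hT : 0 < T) (hω₁ : 0 < ω₁) (hω₂ : 0 < ω₂) (hne : ω₁ ≠ ω₂)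
    (n₁ n₂ : ℕ) (hn₁ : 0 < n₁) (hn₂ : 0 < n₂)
    (hT₁ : ω₁ * T = 2 * Real.pi * n₁) (hT₂ : ω₂ * T = 2 * Real.pi * n₂)
    (U : Set (ℝ × ℝ)) (hU : U ∈ nhds (0 : ℝ × ℝ))
    (r : ℝ × ℝ → ℝ × ℝ) (hr : ContDiffOn ℝ 2 r U) (hr0 : r 0 = 0)
    (heq₁ : ∀ a ∈ U,
      ∫ σ in (0 : ℝ)..T,
        v (r a + (a.1 * Real.sin (ω₁ * σ), a.2 * Real.sin (ω₂ * σ))) * Real.sin (ω₁ * σ) = 0)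
    (heq₂ : ∀ a ∈ U,
      ∫ σ in (0 : ℝ)..T,
        v (r a + (a.1 * Real.sin (ω₁ * σ), a.2 * Real.sin (ω₂ * σ))) * Real.sin (ω₂ * σ) = 0) :
    fderiv ℝ r 0 = 0 := by
  have hsymm : ∀ x y : ℝ × ℝ, fderiv ℝ (fderiv ℝ v) 0 x y = fderiv ℝ (fderiv ℝ v) 0 y x :=
    fun x y => (hv.contDiffAt.isSymmSndFDerivAt (by norm_num)).eq x y
  have hrd : HasFDerivAt r (fderiv ℝ r 0) 0 :=
    ((hr.contDiffAt hU).differentiableAt (by norm_num)).hasFDerivAt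
  have hm₁ : ω₁ * T = 2 * Real.pi * ((n₁ : ℤ) : ℝ) := by push_cast; exact_mod_cast hT₁
  have hm₂ : ω₂ * T = 2 * Real.pi * ((n₂ : ℤ) : ℝ) := by push_cast; exact_mod_cast hT₂
  set L := fderiv ℝ r 0 with hL
  set H := fderiv ℝ (fderiv ℝ v) 0 with hH
  -- key identities
  have key : ∀ h : ℝ × ℝ,
      h.1 * H (L h) (1,0) = 0 ∧ h.2 * H (L h) (0,1) = 0 := by
    intro h
    constructor
    · have Q := quad_vanish v hv hdv0 hsymm T ω₁ ω₂ ω₁ hT (n₁ : ℤ) hm₁ U hU r hr0 L hrd heq₁ h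
      rw [show (fun σ => (fderiv ℝ (fderiv ℝ v) 0
          (L h + (h.1 * Real.sin (ω₁ * σ), h.2 * Real.sin (ω₂ * σ)))
          (L h + (h.1 * Real.sin (ω₁ * σ), h.2 * Real.sin (ω₂ * σ)))) * Real.sin (ω₁ * σ))
        = (fun σ => H (L h + (h.1 * Real.sin (ω₁*σ), h.2 * Real.sin (ω₂*σ)))
          (L h + (h.1 * Real.sin (ω₁*σ), h.2 * Real.sin (ω₂*σ))) * Real.sin (ω₁*σ)) from rfl] at Q
      rw [expand_int H (L h) h.1 h.2 T ω₁ ω₂ ω₁] at Q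
      rw [int_sin_zero ω₁ T (n₁:ℤ) hm₁,
          int_sin_sq ω₁ T (ne_of_gt hω₁) (n₁:ℤ) hm₁,
          int_sin_sin_zero ω₂ ω₁ T (Ne.symm hne) (by positivity) (n₂:ℤ) (n₁:ℤ) hm₂ hm₁,
          int_sin3_zero ω₁ ω₁ ω₁ T (n₁:ℤ) (n₁:ℤ) (n₁:ℤ) hm₁ hm₁ hm₁,
          int_sin3_zero ω₁ ω₂ ω₁ T (n₁:ℤ) (n₂:ℤ) (n₁:ℤ) hm₁ hm₂ hm₁,
          int_sin3_zero ω₂ ω₂ ω₁ T (n₂:ℤ) (n₂:ℤ) (n₁:ℤ) hm₂ hm₂ hm₁] at Q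
      have hsy : H (1,0) (L h) = H (L h) (1,0) := hsymm _ _
      rw [hsy] at Q
      have hQ' : h.1 * (H (L h) (1,0) + H (L h) (1,0)) * (T/2) = 0 := by linarith
      have hT2 : (T:ℝ)/2 ≠ 0 := by positivity
      rcases mul_eq_zero.1 hQ' with h1 | h2
      · rcases mul_eq_zero.1 h1 with h3 | h4
        · rw [h3, zero_mul]
        · have h5 : H (L h) (1,0) = 0 := by linarith
          rw [h5, mul_zero]
      · exact absurd h2 hT2
    · have Q := quad_vanish v hv hdv0 hsymm T ω₁ ω₂ ω₂ hT (n₂ : ℤ) hm₂ U hU r hr0 L hrd heq₂ h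
      rw [show (fun σ => (fderiv ℝ (fderiv ℝ v) 0
          (L h + (h.1 * Real.sin (ω₁ * σ), h.2 * Real.sin (ω₂ * σ)))
          (L h + (h.1 * Real.sin (ω₁ * σ), h.2 * Real.sin (ω₂ * σ)))) * Real.sin (ω₂ * σ))
        = (fun σ => H (L h + (h.1 * Real.sin (ω₁*σ), h.2 * Real.sin (ω₂*σ)))
          (L h + (h.1 * Real.sin (ω₁*σ), h.2 * Real.sin (ω₂*σ))) * Real.sin (ω₂*σ)) from rfl] at Q
      rw [expand_int H (L h) h.1 h.2 T ω₁ ω₂ ω₂] at Q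
      rw [int_sin_zero ω₂ T (n₂:ℤ) hm₂,
          int_sin_sq ω₂ T (ne_of_gt hω₂) (n₂:ℤ) hm₂,
          int_sin_sin_zero ω₁ ω₂ T hne (by positivity) (n₁:ℤ) (n₂:ℤ) hm₁ hm₂,
          int_sin3_zero ω₁ ω₁ ω₂ T (n₁:ℤ) (n₁:ℤ) (n₂:ℤ) hm₁ hm₁ hm₂,
          int_sin3_zero ω₁ ω₂ ω₂ T (n₁:ℤ) (n₂:ℤ) (n₂:ℤ) hm₁ hm₂ hm₂,
          int_sin3_zero ω₂ ω₂ ω₂ T (n₂:ℤ) (n₂:ℤ) (n₂:ℤ) hm₂ hm₂ hm₂] at Q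
      have hsy : H (0,1) (L h) = H (L h) (0,1) := hsymm _ _
      rw [hsy] at Q
      have hQ' : h.2 * (H (L h) (0,1) + H (L h) (0,1)) * (T/2) = 0 := by linarith
      have hT2 : (T:ℝ)/2 ≠ 0 := by positivity
      rcases mul_eq_zero.1 hQ' with h1 | h2
      · rcases mul_eq_zero.1 h1 with h3 | h4
        · rw [h3, zero_mul]
        · have h5 : H (L h) (0,1) = 0 := by linarith
          rw [h5, mul_zero]
      · exact absurd h2 hT2
  have k11 : H (L (1,0)) (1,0) = 0 := by
    have := (key ((1:ℝ),(0:ℝ))).1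
    simpa using this
  have k22 : H (L (0,1)) (0,1) = 0 := by
    have := (key ((0:ℝ),(1:ℝ))).2
    simpa using this
  have hadd : ((1:ℝ),(1:ℝ)) = ((1:ℝ),(0:ℝ)) + ((0:ℝ),(1:ℝ)) := by
    rw [Prod.ext_iff]; constructor <;> simp
  have k21 : H (L (0,1)) (1,0) = 0 := by
    have h1 := (key ((1:ℝ),(1:ℝ))).1
    rw [hadd, map_add] at h1
    simp only [map_add, ContinuousLinearMap.add_apply] at h1
    have : H (L (1,0)) (1,0) + H (L (0,1)) (1,0) = 0 := by
      have h2 : (((1:ℝ),(1:ℝ)) : ℝ×ℝ).1 = 1 := rfl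
      simpa using h1
    rw [k11] at this; linarith
  have k12 : H (L (1,0)) (0,1) = 0 := by
    have h1 := (key ((1:ℝ),(1:ℝ))).2
    rw [hadd, map_add] at h1
    simp only [map_add, ContinuousLinearMap.add_apply] at h1
    have : H (L (1,0)) (0,1) + H (L (0,1)) (0,1) = 0 := by simpa using h1
    rw [k22] at this; linarith
  -- conclude L = 0
  have hbasis : ∀ u : ℝ × ℝ, u = u.1 • ((1:ℝ),(0:ℝ)) + u.2 • ((0:ℝ),(1:ℝ)) := by
    intro u
    rw [Prod.ext_iff]
    constructor <;> simp
  have hcol : ∀ w : ℝ × ℝ, H (L w) (1,0) = 0 ∧ H (L w) (0,1) = 0 := by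
    intro w
    have hLdec : L w = w.1 • L (1,0) + w.2 • L (0,1) := by
      conv_lhs => rw [hbasis w]
      rw [map_add, map_smul, map_smul]
    constructor
    · rw [hLdec]
      simp only [map_add, map_smul, ContinuousLinearMap.add_apply,
        ContinuousLinearMap.smul_apply, smul_eq_mul]
      rw [k11, k21]; ring
    · rw [hLdec]
      simp only [map_add, map_smul, ContinuousLinearMap.add_apply,
        ContinuousLinearMap.smul_apply, smul_eq_mul]
      rw [k12, k22]; ring
  have hLw : ∀ w : ℝ × ℝ, L w = 0 := by
    intro w
    by_contra hw
    have hpos : 0 < H (L w) (L w) := hHpos (L w) hw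
    have h2 : ∀ z : ℝ × ℝ, H (L w) z = z.1 * H (L w) (1,0) + z.2 * H (L w) (0,1) := by
      intro z
      conv_lhs => rw [hbasis z]
      simp only [map_add, map_smul, smul_eq_mul]
    have hzero : H (L w) (L w) = 0 := by
      rw [h2 (L w), (hcol w).1, (hcol w).2]; ring
    linarith
  refine ContinuousLinearMap.ext fun w => ?_
  rw [ContinuousLinearMap.zero_apply]
  exact hLw w
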